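/- Let n ≥ 4 be an integer. For every real x > 0, the quantity F_n(x) = 2(n−1)·((n−1) + (n−3)·(1 − x·coth x)/sinh²(x)) satisfies 4n(n−1)/3 < F_n(x) < 2(n−1)². -/

import Mathlib

private lemma mono_aux {g g' : ℝ → ℝ}
    (h : ∀ y : ℝ, HasDerivAt g (g' y) y)
    (hpos : ∀ y : ℝ, 0 < y → 0 < g' y) : StrictMonoOn g (Set.Ici 0) := by
  apply strictMonoOn_of_hasDerivWithinAt_pos (convex_Ici 0)
    (fun y _ => (h y).continuousAt.continuousWithinAt)
    (fun y _ => (h y).hasDerivWithinAt)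
  intro y hy
  rw [interior_Ici, Set.mem_Ioi] at hy
  exact hpos y hy

private lemma sinh_lt_mul_cosh {x : ℝ} (hx : 0 < x) : Real.sinh x < x * Real.cosh x := by
  have key : StrictMonoOn (fun t => t * Real.cosh t - Real.sinh t) (Set.Ici 0) := by
    apply mono_aux (g' := fun t => t * Real.sinh t)
    · intro y
      have := ((hasDerivAt_id y).mul (Real.hasDerivAt_cosh y)).sub (Real.hasDerivAt_sinh y)
      refine this.congr_deriv ?_
      simp only [id_eq]; ring
    · intro y hy
      exact mul_pos hy (Real.sinh_pos_iff.mpr hy)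
  have := key (Set.self_mem_Ici) (Set.mem_Ici.mpr hx.le) hx
  simpa using this

private lemma cube_ineq {x : ℝ} (hx : 0 < x) :
    x * Real.cosh x - Real.sinh x < (Real.sinh x) ^ 3 / 3 := by
  have key : StrictMonoOn
      (fun t => (Real.sinh t) ^ 3 / 3 - (t * Real.cosh t - Real.sinh t)) (Set.Ici 0) := by
    apply mono_aux (g' := fun t => Real.sinh t * (Real.sinh t * Real.cosh t - t))
    · intro y
      have h1 : HasDerivAt (fun t => (Real.sinh t) ^ 3 / 3)
          ((Real.sinh y) ^ 2 * Real.cosh y) y := by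
        have := ((Real.hasDerivAt_sinh y).pow 3).div_const 3
        refine this.congr_deriv ?_
        ring
      have h2 := ((hasDerivAt_id y).mul (Real.hasDerivAt_cosh y)).sub (Real.hasDerivAt_sinh y)
      have := h1.sub h2
      refine this.congr_deriv ?_
      have hc : Real.cosh y ^ 2 = Real.sinh y ^ 2 + 1 := Real.cosh_sq y
      simp only [id_eq]
      nlinarith [hc]
    · intro y hy
      have hs : 0 < Real.sinh y := Real.sinh_pos_iff.mpr hy
      have h2y : 2 * y < Real.sinh (2 * y) := Real.self_lt_sinh_iff.mpr (by linarith)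
      rw [Real.sinh_two_mul] at h2y
      have : 0 < Real.sinh y * Real.cosh y - y := by linarith
      exact mul_pos hs this
  have := key (Set.self_mem_Ici) (Set.mem_Ici.mpr hx.le) hx
  simp only [Real.sinh_zero, Real.cosh_zero] at this
  linarith [this]

/-- For an integer `n ≥ 4` and every real `x > 0`, the quantity
`F_n x = 2 (n-1) ((n-1) + (n-3) (1 - x coth x)/sinh² x)` satisfies
`4n(n-1)/3 < F_n x < 2(n-1)²`, where `coth x = cosh x / sinh x`. -/
theorem Fn_bounds_of_four_le (n : ℕ) (hn : 4 ≤ n) (x : ℝ) (hx : 0 < x) :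
    4 * (n : ℝ) * ((n : ℝ) - 1) / 3 <
      2 * ((n : ℝ) - 1) * (((n : ℝ) - 1) +
        ((n : ℝ) - 3) * ((1 - x * (Real.cosh x / Real.sinh x)) / (Real.sinh x) ^ 2)) ∧
    2 * ((n : ℝ) - 1) * (((n : ℝ) - 1) +
        ((n : ℝ) - 3) * ((1 - x * (Real.cosh x / Real.sinh x)) / (Real.sinh x) ^ 2)) <
      2 * ((n : ℝ) - 1) ^ 2 := by
  have hs : 0 < Real.sinh x := Real.sinh_pos_iff.mpr hx
  have h1 : Real.sinh x < x * Real.cosh x := sinh_lt_mul_cosh hx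
  have h2 : x * Real.cosh x - Real.sinh x < (Real.sinh x) ^ 3 / 3 := cube_ineq hx
  set g : ℝ := (1 - x * (Real.cosh x / Real.sinh x)) / (Real.sinh x) ^ 2 with hg
  have hgeq : g = (Real.sinh x - x * Real.cosh x) / (Real.sinh x) ^ 3 := by
    rw [hg, div_eq_div_iff (by positivity) (by positivity)]
    field_simp
  have hgneg : g < 0 := by
    rw [hgeq]
    apply div_neg_of_neg_of_pos (by linarith) (by positivity)
  have hglb : -(1/3) < g := by
    rw [hgeq, lt_div_iff₀ (by positivity)]
    nlinarith [pow_pos hs 3]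
  have hn' : (4:ℝ) ≤ (n:ℝ) := by exact_mod_cast hn
  have hn1 : (0:ℝ) < (n:ℝ) - 1 := by linarith
  have hn3 : (0:ℝ) < (n:ℝ) - 3 := by linarith
  constructor
  · nlinarith [mul_pos (mul_pos hn1 hn3) (show (0:ℝ) < g + 1/3 by linarith)]
  · nlinarith [mul_neg_of_pos_of_neg (mul_pos hn1 hn3) hgneg]
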